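/- arXiv:2009.08158 — 6 statements merged into one kernel-verified Lean document; each statement's English description precedes it below -/
import Mathlib

section
/- Let G be a graph, L the set of vertices of degree at most p−1, and S = V(G) \ L. Then G has a vertex cover C such that G[C] is p-edge-connected if and only if S is a vertex cover of G and G[S] is p-edge-connected. -/
/-- `C` is a vertex cover of `G`: every edge has an endpoint in `C`. -/
def IsVertexCover {V : Type*} (G : SimpleGraph V) (C : Set V) : Prop :=
  ∀ ⦃u v : V⦄, G.Adj u v → u ∈ C ∨ v ∈ C

/-- A graph is `p`-edge-connected if it has at least two vertices and removing
any set of fewer than `p` edges leaves it connected. -/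
def PEdgeConnected {V : Type*} (G : SimpleGraph V) (p : ℕ) : Prop :=
  (∃ a b : V, a ≠ b) ∧
    ∀ Y : Set (Sym2 V), Y.encard < (p : ℕ∞) → (G.deleteEdges Y).Connected

/-- In a `p`-edge-connected induced subgraph, every vertex has degree at least `p`
in the ambient graph. -/
lemma degree_ge_of_pec {V : Type*} [Fintype V] [DecidableEq V] (G : SimpleGraph V)
    [DecidableRel G.Adj] {C : Set V} {p : ℕ}
    (h : PEdgeConnected (G.induce C) p) {v : V} (hv : v ∈ C) : p ≤ G.degree v := by
  classical
  by_contra hlt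
  push_neg at hlt
  set v' : ↥C := ⟨v, hv⟩ with hv'
  set Y : Set (Sym2 ↥C) :=
    (fun u : V => if h : u ∈ C then s(v', (⟨u, h⟩ : ↥C)) else s(v', v')) '' (G.neighborSet v)
    with hYdef
  have hYcard : Y.encard < (p : ℕ∞) := by
    have h1 : Y.encard ≤ (G.neighborSet v).encard := Set.encard_image_le _ _
    have h2 : (G.neighborSet v).encard = (G.degree v : ℕ∞) := by
      rw [Set.encard_eq_coe_toFinset_card]
      rfl
    calc Y.encard ≤ (G.degree v : ℕ∞) := h2 ▸ h1
      _ < (p : ℕ∞) := by exact_mod_cast hlt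
  have hconn := h.2 Y hYcard
  obtain ⟨a, b, hab⟩ := h.1
  have hex : ∃ c : ↥C, c ≠ v' := by
    by_cases ha : a = v'
    · exact ⟨b, fun hb => hab (by rw [ha, hb])⟩
    · exact ⟨a, ha⟩
  obtain ⟨c, hc⟩ := hex
  obtain ⟨w⟩ := hconn.preconnected v' c
  cases w with
  | nil => exact hc rfl
  | cons hadj w' =>
    rw [SimpleGraph.deleteEdges_adj] at hadj
    rename_i u
    apply hadj.2
    rw [hYdef]
    exact ⟨u.1, hadj.1, dif_pos u.2⟩

/-- Transferring `p`-edge-connectivity from an induced vertex cover to a superset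
whose vertices all have degree at least `p`. -/
lemma pec_transfer {V : Type*} [Fintype V] [DecidableEq V] (G : SimpleGraph V)
    [DecidableRel G.Adj] {C S : Set V} {p : ℕ} (hCS : C ⊆ S)
    (hcov : IsVertexCover G C)
    (hdeg : ∀ v ∈ S, p ≤ G.degree v)
    (h : PEdgeConnected (G.induce C) p) :
    PEdgeConnected (G.induce S) p := by
  classical
  obtain ⟨⟨a, b, hab⟩, hconn⟩ := h
  constructor
  · refine ⟨Set.inclusion hCS a, Set.inclusion hCS b, ?_⟩
    intro h
    exact hab (Set.inclusion_injective hCS h)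
  intro Y hY
  set ι : ↥C → ↥S := Set.inclusion hCS with hιdef
  have hι : Function.Injective ι := Set.inclusion_injective hCS
  set Y' : Set (Sym2 ↥C) := Sym2.map ι ⁻¹' Y with hY'def
  have hY' : Y'.encard < (p : ℕ∞) := by
    refine lt_of_le_of_lt ?_ hY
    calc Y'.encard = (Sym2.map ι '' Y').encard :=
          ((Sym2.map.injective hι).injOn).encard_image.symm
      _ ≤ Y.encard := Set.encard_mono (Set.image_preimage_subset _ _)
  have hc' := hconn Y' hY'
  have fmap : ∀ {x y : ↥C}, ((G.induce C).deleteEdges Y').Adj x y →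
      ((G.induce S).deleteEdges Y).Adj (ι x) (ι y) := by
    intro x y hxy
    rw [SimpleGraph.deleteEdges_adj] at hxy ⊢
    refine ⟨hxy.1, fun hmem => hxy.2 ?_⟩
    rw [hY'def, Set.mem_preimage, Sym2.map_pair_eq]
    exact hmem
  let f : ((G.induce C).deleteEdges Y') →g ((G.induce S).deleteEdges Y) :=
    ⟨ι, fun h => fmap h⟩
  have step : ∀ v : ↥S, ∃ u : ↥C, ((G.induce S).deleteEdges Y).Reachable v (ι u) := by
    intro v
    by_cases hvC : v.1 ∈ C
    · exact ⟨⟨v.1, hvC⟩, SimpleGraph.Reachable.refl v⟩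
    · -- v is not in C, so all neighbors of v are in C; one of the edges survives
      have hnbC : ∀ u : V, G.Adj v.1 u → u ∈ C := by
        intro u hu
        rcases hcov hu with h | h
        · exact absurd h hvC
        · exact h
      by_contra hno
      push_neg at hno
      -- every edge from v into C must lie in Y
      have hall : ∀ u : V, G.Adj v.1 u → ∀ hus : u ∈ S, s(v, (⟨u, hus⟩ : ↥S)) ∈ Y := by
        intro u hu hus
        by_contra hnot
        have hadj : ((G.induce S).deleteEdges Y).Adj v ⟨u, hus⟩ := by
          rw [SimpleGraph.deleteEdges_adj]
          exact ⟨hu, hnot⟩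
        exact hno ⟨u, hnbC u hu⟩ hadj.reachable
      set g : V → Sym2 ↥S := fun u => if h : u ∈ S then s(v, (⟨u, h⟩ : ↥S)) else s(v, v)
        with hgdef
      have hinj : Set.InjOn g (G.neighborSet v.1) := by
        intro x hx y hy hxy
        have hxS : x ∈ S := hCS (hnbC x hx)
        have hyS : y ∈ S := hCS (hnbC y hy)
        rw [hgdef] at hxy
        simp only [dif_pos hxS, dif_pos hyS] at hxy
        rw [Sym2.eq_iff] at hxy
        rcases hxy with ⟨-, h2⟩ | ⟨h1, -⟩
        · exact congrArg Subtype.val h2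
        · exfalso
          have hvx : v.1 ≠ y := fun he => G.irrefl (he ▸ hy)
          exact hvx (congrArg Subtype.val h1)
      have hsub : g '' (G.neighborSet v.1) ⊆ Y := by
        rintro e ⟨u, hu, rfl⟩
        have huS : u ∈ S := hCS (hnbC u hu)
        rw [hgdef]
        simp only [dif_pos huS]
        exact hall u hu huS
      have hled : (p : ℕ∞) ≤ Y.encard := by
        have h2 : (G.neighborSet v.1).encard = (G.degree v.1 : ℕ∞) := by
          rw [Set.encard_eq_coe_toFinset_card]; rfl
        calc (p : ℕ∞) ≤ (G.degree v.1 : ℕ∞) := by exact_mod_cast hdeg v.1 v.2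
          _ = (G.neighborSet v.1).encard := h2.symm
          _ = (g '' (G.neighborSet v.1)).encard := hinj.encard_image.symm
          _ ≤ Y.encard := Set.encard_mono hsub
      exact absurd hY (not_lt.mpr hled)
  haveI : Nonempty ↥S := ⟨Set.inclusion hCS a⟩
  refine SimpleGraph.Connected.mk ?_
  intro x y
  obtain ⟨cx, hx⟩ := step x
  obtain ⟨cy, hy⟩ := step y
  exact hx.trans (((hc'.preconnected cx cy).map f).trans hy.symm)

/-- `G` has a vertex cover inducing a `p`-edge-connected subgraph iff the set `S`
of vertices of degree at least `p` (the complement of the set `L` of vertices of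
degree at most `p - 1`) is such a vertex cover. -/
theorem stmt2 {V : Type*} [Fintype V] [DecidableEq V] (G : SimpleGraph V)
    [DecidableRel G.Adj] (p : ℕ) :
    (∃ C : Set V, IsVertexCover G C ∧ PEdgeConnected (G.induce C) p) ↔
      (IsVertexCover G {v : V | p ≤ G.degree v} ∧
        PEdgeConnected (G.induce {v : V | p ≤ G.degree v}) p) := by
  constructor
  · rintro ⟨C, hcov, hpec⟩
    have hCS : C ⊆ {v : V | p ≤ G.degree v} := fun v hv => degree_ge_of_pec G hpec hv
    have hcovS : IsVertexCover G {v : V | p ≤ G.degree v} :=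
      fun u v h => (hcov h).imp (fun hu => hCS hu) (fun hv => hCS hv)
    exact ⟨hcovS, pec_transfer G hCS hcov (fun v hv => hv) hpec⟩
  · rintro ⟨h1, h2⟩
    exact ⟨_, h1, h2⟩
end

section
/- Let G be a graph, L the set of vertices of degree at most p−1, and S = V(G) \ L. Then G has a vertex cover C such that G[C] is p-vertex-connected if and only if S is a vertex cover of G and G[S] is p-vertex-connected. -/
/-- A graph is `p`-vertex-connected if it has more than `p` vertices and removing
any set of fewer than `p` vertices leaves it connected. -/
def PVertexConnected {V : Type*} (G : SimpleGraph V) (p : ℕ) : Prop :=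
  (p : ℕ∞) < (Set.univ : Set V).encard ∧
    ∀ X : Set V, X.encard < (p : ℕ∞) → (G.induce Xᶜ).Connected

private lemma first_adj {W : Type*} {H : SimpleGraph W} {a b : W}
    (h : H.Reachable a b) (hne : a ≠ b) : ∃ c, H.Adj a c := by
  obtain ⟨w⟩ := h
  exact ⟨w.getVert 1, w.adj_snd (SimpleGraph.Walk.not_nil_of_ne hne)⟩

private lemma mindeg {W : Type*} {H : SimpleGraph W} {p : ℕ}
    (h : PVertexConnected H p) (v : W) : (p : ℕ∞) ≤ (H.neighborSet v).encard := by
  by_contra hlt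
  push_neg at hlt
  obtain ⟨hcard, hconn⟩ := h
  have hc := hconn _ hlt
  have hv : v ∈ (H.neighborSet v)ᶜ := by simp
  have h2 : ¬ ((H.neighborSet v)ᶜ ⊆ {v}) := by
    intro hsub
    have h3 : (Set.univ : Set W).encard ≤ (H.neighborSet v).encard + 1 := by
      calc (Set.univ : Set W).encard
          = (H.neighborSet v ∪ (H.neighborSet v)ᶜ).encard := by rw [Set.union_compl_self]
        _ ≤ (H.neighborSet v).encard + ((H.neighborSet v)ᶜ).encard := Set.encard_union_le _ _
        _ ≤ (H.neighborSet v).encard + 1 := by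
            gcongr
            exact le_trans (Set.encard_mono hsub) (by simp)
    have h4 : (H.neighborSet v).encard + 1 ≤ (p : ℕ∞) := Order.add_one_le_of_lt hlt
    exact absurd (lt_of_lt_of_le hcard (h3.trans h4)) (lt_irrefl _)
  obtain ⟨u, huc, hune⟩ := Set.not_subset.mp h2
  have hne : (⟨v, hv⟩ : ↥(H.neighborSet v)ᶜ) ≠ ⟨u, huc⟩ := by
    intro he
    apply hune
    simpa using (congrArg Subtype.val he).symm
  obtain ⟨c, hadj⟩ := first_adj (hc.preconnected ⟨v, hv⟩ ⟨u, huc⟩) hne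
  have hadj' : H.Adj v c.1 := hadj
  exact c.2 hadj'

/-- `G` has a vertex cover inducing a `p`-vertex-connected subgraph iff the set `S`
of vertices of degree at least `p` (the complement of the set `L` of vertices of
degree at most `p - 1`) is such a vertex cover. -/
theorem stmt3 {V : Type*} [Fintype V] [DecidableEq V] (G : SimpleGraph V)
    [DecidableRel G.Adj] (p : ℕ) :
    (∃ C : Set V, IsVertexCover G C ∧ PVertexConnected (G.induce C) p) ↔
      (IsVertexCover G {v : V | p ≤ G.degree v} ∧
        PVertexConnected (G.induce {v : V | p ≤ G.degree v}) p) := by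
  constructor
  · rintro ⟨C, hcov, hpv⟩
    set S : Set V := {v : V | p ≤ G.degree v} with hSdef
    have hdeg : ∀ v : V, (G.neighborSet v).encard = (G.degree v : ℕ∞) := by
      intro v
      rw [Set.encard_eq_coe_toFinset_card]
      rfl
    have hCS : C ⊆ S := by
      intro v hvC
      have h1 := mindeg hpv (⟨v, hvC⟩ : ↥C)
      have h2 : Subtype.val '' ((G.induce C).neighborSet ⟨v, hvC⟩) ⊆ G.neighborSet v := by
        rintro u ⟨w, hw, rfl⟩
        exact hw
      have h3 : ((G.induce C).neighborSet ⟨v, hvC⟩).encard ≤ (G.neighborSet v).encard := by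
        rw [← Subtype.val_injective.encard_image _]
        exact Set.encard_mono h2
      have h4 := h1.trans h3
      rw [hdeg v] at h4
      exact_mod_cast h4
    have hcovS : IsVertexCover G S :=
      fun u v h => (hcov h).imp (fun h' => hCS h') (fun h' => hCS h')
    refine ⟨hcovS, ?_, ?_⟩
    · have h1 : (Set.univ : Set ↥C).encard = C.encard := by
        rw [← Subtype.val_injective.encard_image _, Subtype.coe_image_univ]
      have h2 : (Set.univ : Set ↥S).encard = S.encard := by
        rw [← Subtype.val_injective.encard_image _, Subtype.coe_image_univ]
      have h0 := hpv.1
      rw [h1] at h0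
      rw [h2]
      exact lt_of_lt_of_le h0 (Set.encard_mono hCS)
    · intro X hX
      set X' : Set V := Subtype.val '' X with hX'def
      have hX'card : X'.encard < (p : ℕ∞) := by
        rw [hX'def, Subtype.val_injective.encard_image _]; exact hX
      set Y : Set ↥C := Subtype.val ⁻¹' X' with hYdef
      have hYcard : Y.encard < (p : ℕ∞) := by
        calc Y.encard = (Subtype.val '' Y).encard :=
              (Subtype.val_injective.encard_image _).symm
          _ ≤ X'.encard := Set.encard_mono (Set.image_preimage_subset _ _)
          _ < (p : ℕ∞) := hX'card
      have hH := hpv.2 Y hYcard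
      have hmemX : ∀ (v : V) (hv : v ∈ S), (⟨v, hv⟩ : ↥S) ∈ X ↔ v ∈ X' := by
        intro v hv
        constructor
        · intro h; exact ⟨_, h, rfl⟩
        · rintro ⟨w, hw, rfl⟩
          rwa [Subtype.coe_eta]
      let f : ↥(Yᶜ : Set ↥C) → ↥(Xᶜ : Set ↥S) := fun a =>
        ⟨⟨a.1.1, hCS a.1.2⟩, fun hmem' => a.2 ((hmemX a.1.1 (hCS a.1.2)).mp hmem')⟩
      have hf : ∀ a b, ((G.induce C).induce (Yᶜ : Set ↥C)).Adj a b →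
          ((G.induce S).induce (Xᶜ : Set ↥S)).Adj (f a) (f b) := by
        intro a b hab
        exact hab
      have hreach : ∀ a b : ↥(Yᶜ : Set ↥C),
          ((G.induce S).induce (Xᶜ : Set ↥S)).Reachable (f a) (f b) := by
        intro a b
        exact SimpleGraph.Reachable.map ⟨f, fun {a b} h => hf a b h⟩ (hH.preconnected a b)
      have hkey : ∀ a : ↥(Xᶜ : Set ↥S), ∃ b : ↥(Yᶜ : Set ↥C),
          ((G.induce S).induce (Xᶜ : Set ↥S)).Reachable a (f b) := by
        rintro ⟨⟨v, hvS⟩, hvX⟩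
        by_cases hvC : v ∈ C
        · have hb : (⟨v, hvC⟩ : ↥C) ∉ Y := fun hY' => hvX ((hmemX v hvS).mpr hY')
          refine ⟨⟨⟨v, hvC⟩, hb⟩, ?_⟩
          have heq : f ⟨⟨v, hvC⟩, hb⟩ = ⟨⟨v, hvS⟩, hvX⟩ := Subtype.ext (Subtype.ext rfl)
          rw [heq]
        · have hdegv : (p : ℕ∞) ≤ (G.neighborSet v).encard := by
            rw [hdeg v]; exact_mod_cast hvS
          have hnb : ¬ (G.neighborSet v ⊆ X') := by
            intro hsub
            exact absurd (hdegv.trans (Set.encard_mono hsub)) (not_le.mpr hX'card)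
          obtain ⟨u, hu, huX'⟩ := Set.not_subset.mp hnb
          have huC : u ∈ C := (hcov hu).resolve_left hvC
          have huS : u ∈ S := hCS huC
          have huY : (⟨u, huC⟩ : ↥C) ∉ Y := huX'
          refine ⟨⟨⟨u, huC⟩, huY⟩, ?_⟩
          have hadj : ((G.induce S).induce (Xᶜ : Set ↥S)).Adj ⟨⟨v, hvS⟩, hvX⟩
              (f ⟨⟨u, huC⟩, huY⟩) := hu
          exact hadj.reachable
      obtain ⟨b0⟩ := hH.nonempty
      rw [SimpleGraph.connected_iff]
      refine ⟨?_, ⟨f b0⟩⟩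
      intro a b
      obtain ⟨ba, hra⟩ := hkey a
      obtain ⟨bb, hrb⟩ := hkey b
      exact hra.trans ((hreach ba bb).trans hrb.symm)
  · intro h
    exact ⟨_, h.1, h.2⟩
end

section
/- Let G be an undirected graph and v_r ∈ V(G). Let D_G be the digraph obtained by replacing each edge uv of G by both arcs (u,v) and (v,u). Then G is p-edge-connected if and only if D_G contains p pairwise arc-disjoint out-branchings rooted at v_r. -/
/-- `F` is the arc set of an out-branching (spanning arborescence) rooted at `r`. -/
def IsOutBranching {V : Type*} (F : Set (V × V)) (r : V) : Prop :=
  ({a ∈ F | a.2 = r} = ∅) ∧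
    (∀ v : V, v ≠ r → ({a ∈ F | a.2 = v}).ncard = 1) ∧
    (∀ v : V, Relation.ReflTransGen (fun x y => (x, y) ∈ F) r v)

section Edmonds
set_option linter.unusedSectionVars false

variable {V : Type*} [Fintype V]

/-- The set of arcs of `E` entering the vertex set `X`. -/
def entArcs (E : Set (V × V)) (X : Set V) : Set (V × V) :=
  {a ∈ E | a.1 ∉ X ∧ a.2 ∈ X}

/-- In-degree of a vertex set. -/
noncomputable def rhoDeg (E : Set (V × V)) (X : Set V) : ℕ := (entArcs E X).ncard

/-- The Edmonds cut condition. -/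
def CutCond (E : Set (V × V)) (r : V) (k : ℕ) : Prop :=
  ∀ X : Set V, X.Nonempty → r ∉ X → k ≤ rhoDeg E X

/-- `F` is an arborescence rooted at `r` with vertex set `U`, inside `E`. -/
def Arb (E F : Set (V × V)) (r : V) (U : Set V) : Prop :=
  F ⊆ E ∧ r ∈ U ∧ (∀ a ∈ F, a.1 ∈ U ∧ a.2 ∈ U ∧ a.2 ≠ r) ∧
    (∀ v ∈ U, v ≠ r → ({a ∈ F | a.2 = v}).ncard = 1) ∧
    (∀ v ∈ U, Relation.ReflTransGen (fun x y => (x, y) ∈ F) r v)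

lemma rhoDeg_submod (E : Set (V × V)) (X Y : Set V) :
    rhoDeg E (X ∪ Y) + rhoDeg E (X ∩ Y) ≤ rhoDeg E X + rhoDeg E Y := by
  have h1 : entArcs E (X ∪ Y) ∪ entArcs E (X ∩ Y) ⊆ entArcs E X ∪ entArcs E Y := by
    intro a ha
    simp only [entArcs, Set.mem_union, Set.mem_setOf_eq, Set.mem_inter_iff] at *
    tauto
  have h2 : entArcs E (X ∪ Y) ∩ entArcs E (X ∩ Y) ⊆ entArcs E X ∩ entArcs E Y := by
    intro a ha
    simp only [entArcs, Set.mem_union, Set.mem_setOf_eq, Set.mem_inter_iff] at *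
    tauto
  calc rhoDeg E (X ∪ Y) + rhoDeg E (X ∩ Y)
      = (entArcs E (X ∪ Y) ∪ entArcs E (X ∩ Y)).ncard
        + (entArcs E (X ∪ Y) ∩ entArcs E (X ∩ Y)).ncard :=
        (Set.ncard_union_add_ncard_inter _ _ (Set.toFinite _) (Set.toFinite _)).symm
    _ ≤ (entArcs E X ∪ entArcs E Y).ncard + (entArcs E X ∩ entArcs E Y).ncard :=
        add_le_add (Set.ncard_le_ncard h1 (Set.toFinite _))
          (Set.ncard_le_ncard h2 (Set.toFinite _))
    _ = rhoDeg E X + rhoDeg E Y :=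
        Set.ncard_union_add_ncard_inter _ _ (Set.toFinite _) (Set.toFinite _)

lemma entArcs_diff (E F : Set (V × V)) (X : Set V) :
    entArcs (E \ F) X = entArcs E X \ F := by
  ext a; simp only [entArcs, Set.mem_setOf_eq, Set.mem_diff]; tauto

lemma exists_min_mem (T : Set (Set V)) (hT : T.Nonempty) :
    ∃ M ∈ T, ∀ Z ∈ T, Z ⊆ M → Z = M := by
  obtain ⟨M, hM, hmin⟩ := Set.Finite.exists_minimal (Set.toFinite T) hT
  exact ⟨M, hM, fun Z hZ hZM => Set.Subset.antisymm hZM (hmin hZ hZM)⟩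

lemma find_arc (E F : Set (V × V)) (r : V) (k : ℕ) (U : Set V)
    (hE : CutCond E r (k + 1))
    (hFU : ∀ a ∈ F, a.2 ∈ U)
    (hrU : r ∈ U) (hU : U ≠ Set.univ)
    (hinv : ∀ X : Set V, X.Nonempty → r ∉ X → k ≤ rhoDeg (E \ F) X) :
    ∃ u v : V, (u, v) ∈ E \ F ∧ u ∈ U ∧ v ∉ U ∧
      ∀ Y : Set V, Y.Nonempty → r ∉ Y → (u, v) ∈ entArcs (E \ F) Y →
        k + 1 ≤ rhoDeg (E \ F) Y := by
  classical
  set T : Set (Set V) := {X | X.Nonempty ∧ r ∉ X ∧ ¬ X ⊆ U ∧ rhoDeg (E \ F) X = k}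
    with hTdef
  by_cases hT : T.Nonempty
  · obtain ⟨X, hXT, hmin⟩ := exists_min_mem T hT
    obtain ⟨hXne, hXr, hXU, hXrho⟩ := hXT
    have hWne : (X \ U).Nonempty := Set.diff_nonempty.mpr hXU
    have hWr : r ∉ X \ U := fun h => h.2 hrU
    have hnoF : entArcs (E \ F) (X \ U) = entArcs E (X \ U) := by
      ext a
      simp only [entArcs, Set.mem_setOf_eq, Set.mem_diff]
      constructor
      · rintro ⟨⟨haE, _⟩, h1, h2⟩; exact ⟨haE, h1, h2⟩
      · rintro ⟨haE, h1, h2⟩; exact ⟨⟨haE, fun hF => h2.2 (hFU a hF)⟩, h1, h2⟩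
    have hWrho : k + 1 ≤ (entArcs (E \ F) (X \ U)).ncard := by
      rw [hnoF]; exact hE _ hWne hWr
    set S := entArcs (E \ F) (X \ U) with hS
    set B := {a ∈ S | a.1 ∈ X} with hB
    set C := {a ∈ S | a.1 ∉ X} with hC
    have hCsub : C ⊆ entArcs (E \ F) X := by
      rintro a ⟨⟨haEF, h1, h2⟩, h3⟩
      exact ⟨haEF, h3, h2.1⟩
    have hCcard : C.ncard ≤ k := hXrho ▸ Set.ncard_le_ncard hCsub (Set.toFinite _)
    have hBC : B ∪ C = S := by
      ext a; by_cases h : a.1 ∈ X <;> simp [hB, hC, h]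
    have hdisjBC : Disjoint B C := by
      rw [Set.disjoint_left]; rintro a ⟨_, h⟩ ⟨_, h'⟩; exact h' h
    have hsplit : B.ncard + C.ncard = S.ncard := by
      rw [← Set.ncard_union_eq hdisjBC (Set.toFinite _) (Set.toFinite _), hBC]
    have hBne : B.Nonempty := by
      apply Set.nonempty_of_ncard_ne_zero; omega
    obtain ⟨⟨u, v⟩, hB1, hB2⟩ := hBne
    obtain ⟨huvEF, hu1, hv2⟩ := hB1
    have huU : u ∈ U := by
      by_contra huU
      exact hu1 ⟨hB2, huU⟩
    refine ⟨u, v, huvEF, huU, hv2.2, ?_⟩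
    intro Y hYne hYr heY
    by_contra hlt
    push_neg at hlt
    have hYrho : rhoDeg (E \ F) Y = k := le_antisymm (by omega) (hinv Y hYne hYr)
    obtain ⟨-, huY, hvY⟩ := heY
    have hZT : X ∩ Y ∈ T := by
      have hvZ : v ∈ X ∩ Y := ⟨hv2.1, hvY⟩
      refine ⟨⟨v, hvZ⟩, fun h => hXr h.1, fun hsub => hv2.2 (hsub hvZ), ?_⟩
      have hsm := rhoDeg_submod (E \ F) X Y
      have hu2 : k ≤ rhoDeg (E \ F) (X ∪ Y) := by
        refine hinv _ ⟨v, Or.inl hv2.1⟩ ?_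
        rintro (h | h)
        · exact hXr h
        · exact hYr h
      have hi2 : k ≤ rhoDeg (E \ F) (X ∩ Y) :=
        hinv _ ⟨v, hvZ⟩ (fun h => hXr h.1)
      omega
    have hXY := hmin _ hZT Set.inter_subset_left
    have huXY : u ∈ X ∩ Y := by rw [hXY]; exact hB2
    exact huY huXY.2
  · have hUc : (Uᶜ).Nonempty := Set.nonempty_compl.mpr hU
    have hUcr : r ∉ Uᶜ := by simpa using hrU
    have hnsub : ¬ Uᶜ ⊆ U := by
      intro hsub; obtain ⟨w, hw⟩ := hUc; exact hw (hsub hw)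
    have hnot : rhoDeg (E \ F) Uᶜ ≠ k := fun h => hT ⟨Uᶜ, hUc, hUcr, hnsub, h⟩
    have hge : k + 1 ≤ rhoDeg (E \ F) Uᶜ :=
      lt_of_le_of_ne (hinv _ hUc hUcr) (Ne.symm hnot)
    have hSne : (entArcs (E \ F) Uᶜ).Nonempty := by
      apply Set.nonempty_of_ncard_ne_zero
      have : rhoDeg (E \ F) Uᶜ = (entArcs (E \ F) Uᶜ).ncard := rfl
      omega
    obtain ⟨⟨u, v⟩, huvEF, hu1, hv2⟩ := hSne
    refine ⟨u, v, huvEF, by simpa using hu1, hv2, ?_⟩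
    intro Y hYne hYr heY
    by_contra hlt
    push_neg at hlt
    have hYrho : rhoDeg (E \ F) Y = k := le_antisymm (by omega) (hinv Y hYne hYr)
    obtain ⟨-, huY, hvY⟩ := heY
    exact hT ⟨Y, hYne, hYr, fun hsub => hv2 (hsub hvY), hYrho⟩

lemma extend_arb (E : Set (V × V)) (r : V) (k : ℕ) (hE : CutCond E r (k + 1)) :
    ∀ (n : ℕ) (U : Set V) (F : Set (V × V)), Uᶜ.ncard ≤ n → Arb E F r U →
      (∀ X : Set V, X.Nonempty → r ∉ X → k ≤ rhoDeg (E \ F) X) →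
      ∃ F', F ⊆ F' ∧ Arb E F' r Set.univ ∧
        ∀ X : Set V, X.Nonempty → r ∉ X → k ≤ rhoDeg (E \ F') X := by
  intro n
  induction n with
  | zero =>
    intro U F hn hArb hinv
    have hU : U = Set.univ := by
      have h0 : Uᶜ = ∅ := (Set.ncard_eq_zero (Set.toFinite _)).mp (Nat.le_zero.mp hn)
      simpa [Set.compl_empty_iff] using h0
    exact ⟨F, subset_rfl, hU ▸ hArb, hinv⟩
  | succ n ih =>
    intro U F hn hArb hinv
    by_cases hU : U = Set.univ
    · exact ⟨F, subset_rfl, hU ▸ hArb, hinv⟩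
    obtain ⟨hFE, hrU, hFarcs, hdeg, hreach⟩ := hArb
    obtain ⟨u, v, huvEF, huU, hvU, hsafe⟩ :=
      find_arc E F r k U hE (fun a ha => (hFarcs a ha).2.1) hrU hU hinv
    have hArb' : Arb E (insert (u, v) F) r (insert v U) := by
      refine ⟨Set.insert_subset huvEF.1 hFE, Set.mem_insert_of_mem _ hrU, ?_, ?_, ?_⟩
      · rintro a (rfl | ha)
        · exact ⟨Set.mem_insert_of_mem _ huU, Set.mem_insert _ _,
            fun h => hvU (by rw [show v = r from h]; exact hrU)⟩
        · obtain ⟨h1, h2, h3⟩ := hFarcs a ha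
          exact ⟨Set.mem_insert_of_mem _ h1, Set.mem_insert_of_mem _ h2, h3⟩
      · rintro w (rfl | hwU) hwr
        · have heq : {a ∈ insert (u, w) F | a.2 = w} = {(u, w)} := by
            ext a
            simp only [Set.mem_setOf_eq, Set.mem_insert_iff, Set.mem_singleton_iff]
            constructor
            · rintro ⟨rfl | haF, h2⟩
              · rfl
              · exact absurd (h2 ▸ (hFarcs a haF).2.1) hvU
            · rintro rfl; exact ⟨Or.inl rfl, rfl⟩
          rw [heq]
          exact Set.ncard_singleton _
        · have hwv : w ≠ v := fun h => hvU (h ▸ hwU)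
          have heq : {a ∈ insert (u, v) F | a.2 = w} = {a ∈ F | a.2 = w} := by
            ext a
            simp only [Set.mem_setOf_eq, Set.mem_insert_iff]
            constructor
            · rintro ⟨rfl | haF, h2⟩
              · exact absurd h2 (Ne.symm hwv)
              · exact ⟨haF, h2⟩
            · rintro ⟨haF, h2⟩; exact ⟨Or.inr haF, h2⟩
          rw [heq]
          exact hdeg w hwU hwr
      · rintro w (rfl | hwU)
        · exact (Relation.ReflTransGen.mono
            (fun x y hxy => Set.mem_insert_of_mem _ hxy) _ _ (hreach u huU)).tail (Set.mem_insert _ _)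
        · exact Relation.ReflTransGen.mono (fun x y hxy => Set.mem_insert_of_mem _ hxy) _ _ (hreach w hwU)
    have hinv' : ∀ X : Set V, X.Nonempty → r ∉ X →
        k ≤ rhoDeg (E \ insert (u, v) F) X := by
      intro X hXne hXr
      have hEdiff : E \ insert (u, v) F = (E \ F) \ {(u, v)} := by
        ext a
        simp only [Set.mem_diff, Set.mem_insert_iff, Set.mem_singleton_iff]
        tauto
      have hEq : entArcs (E \ insert (u, v) F) X = entArcs (E \ F) X \ {(u, v)} := by
        rw [hEdiff, entArcs_diff]
      by_cases hecase : (u, v) ∈ entArcs (E \ F) X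
      · have h1 := hsafe X hXne hXr hecase
        have h2 : (entArcs (E \ F) X \ {(u, v)}).ncard
            = (entArcs (E \ F) X).ncard - 1 :=
          Set.ncard_diff_singleton_of_mem hecase
        have h3 : rhoDeg (E \ insert (u, v) F) X
            = (entArcs (E \ F) X).ncard - 1 := by
          rw [rhoDeg, hEq, h2]
        rw [h3]
        have h4 : k + 1 ≤ (entArcs (E \ F) X).ncard := h1
        omega
      · rw [rhoDeg, hEq, Set.diff_singleton_eq_self hecase]
        exact hinv X hXne hXr
    have hn' : (insert v U)ᶜ.ncard ≤ n := by
      have h1 : (insert v U)ᶜ = Uᶜ \ {v} := by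
        ext w
        simp only [Set.mem_compl_iff, Set.mem_insert_iff, Set.mem_diff,
          Set.mem_singleton_iff]
        tauto
      have hv : v ∈ Uᶜ := hvU
      have hpos : 0 < Uᶜ.ncard := (Set.ncard_pos (Set.toFinite _)).mpr ⟨v, hv⟩
      rw [h1, Set.ncard_diff_singleton_of_mem hv]
      omega
    obtain ⟨F'', hsub, hA, hi⟩ := ih (insert v U) (insert (u, v) F) hn' hArb' hinv'
    exact ⟨F'', (Set.subset_insert _ _).trans hsub, hA, hi⟩

lemma branchings (r : V) : ∀ (p : ℕ) (E : Set (V × V)), CutCond E r p →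
    ∃ f : Fin p → Set (V × V),
      (∀ k : Fin p, f k ⊆ E ∧ IsOutBranching (f k) r) ∧
      (∀ k l : Fin p, k ≠ l → Disjoint (f k) (f l)) := by
  intro p
  induction p with
  | zero => exact fun E _ => ⟨fun _ => ∅, fun k => k.elim0, fun k => k.elim0⟩
  | succ p ih =>
    intro E hE
    have hArb0 : Arb E ∅ r {r} := by
      refine ⟨Set.empty_subset _, rfl, ?_, ?_, ?_⟩
      · rintro a ⟨⟩
      · rintro v rfl hvr
        exact absurd rfl hvr
      · rintro v rfl
        exact Relation.ReflTransGen.refl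
    obtain ⟨F, -, hArbF, hinvF⟩ := extend_arb E r p hE (({r}ᶜ : Set V).ncard) {r} ∅
      le_rfl hArb0
      (fun X hX hr => by
        rw [Set.diff_empty]; exact (Nat.le_succ p).trans (hE X hX hr))
    obtain ⟨hFE, -, hFarcs, hdeg, hreach⟩ := hArbF
    have hOB : IsOutBranching F r := by
      refine ⟨?_, fun v hv => hdeg v (Set.mem_univ v) hv,
        fun v => hreach v (Set.mem_univ v)⟩
      ext a
      simp only [Set.mem_setOf_eq, Set.mem_empty_iff_false, iff_false, not_and]
      exact fun haF => (hFarcs a haF).2.2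
    obtain ⟨f, hf, hdisj⟩ := ih (E \ F) hinvF
    refine ⟨Fin.cons F f, ?_, ?_⟩
    · intro k
      obtain rfl | ⟨j, rfl⟩ := Fin.eq_zero_or_eq_succ k
      · simp only [Fin.cons_zero]
        exact ⟨hFE, hOB⟩
      · simp only [Fin.cons_succ]
        exact ⟨((hf j).1).trans Set.diff_subset, (hf j).2⟩
    · intro k l hkl
      obtain rfl | ⟨j, rfl⟩ := Fin.eq_zero_or_eq_succ k <;>
        obtain rfl | ⟨j', rfl⟩ := Fin.eq_zero_or_eq_succ l
      · exact absurd rfl hkl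
      · simp only [Fin.cons_zero, Fin.cons_succ]
        exact Set.disjoint_right.mpr fun x hx => ((hf j').1 hx).2
      · simp only [Fin.cons_zero, Fin.cons_succ]
        exact (Set.disjoint_right.mpr fun x hx => ((hf j).1 hx).2).symm
      · simp only [Fin.cons_succ]
        exact hdisj j j' fun h => hkl (by rw [h])

end Edmonds

/-- A graph `G` (on at least two vertices) is `p`-edge-connected iff the digraph
`D_G`, obtained by replacing every edge `uv` by the two arcs `(u,v)` and `(v,u)`,
contains `p` pairwise arc-disjoint out-branchings rooted at `v_r`. -/
theorem stmt7 {V : Type*} [Fintype V] [Nontrivial V] (G : SimpleGraph V)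
    (p : ℕ) (vr : V) :
    PEdgeConnected G p ↔
      ∃ f : Fin p → Set (V × V),
        (∀ k : Fin p, f k ⊆ {a : V × V | G.Adj a.1 a.2} ∧ IsOutBranching (f k) vr) ∧
        (∀ k l : Fin p, k ≠ l → Disjoint (f k) (f l)) := by
  constructor
  · rintro ⟨-, hconn⟩
    apply branchings vr p
    intro X hXne hXr
    by_contra hlt
    push_neg at hlt
    set S := entArcs {a : V × V | G.Adj a.1 a.2} X with hS
    set Y : Set (Sym2 V) := (fun a : V × V => s(a.1, a.2)) '' S with hY
    have hYcard : Y.encard < (p : ℕ∞) := by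
      calc Y.encard ≤ S.encard := Set.encard_image_le _ _
        _ = (S.ncard : ℕ∞) := ((Set.toFinite S).cast_ncard_eq).symm
        _ < (p : ℕ∞) := by exact_mod_cast hlt
    have hGY := hconn Y hYcard
    obtain ⟨x, hx⟩ := hXne
    obtain ⟨w⟩ := hGY.preconnected vr x
    -- find a crossing edge along the walk
    have hcross : ∀ {a b : V} (q : (G.deleteEdges Y).Walk a b), a ∉ X → b ∈ X →
        ∃ c d : V, (G.deleteEdges Y).Adj c d ∧ c ∉ X ∧ d ∈ X := by
      intro a b q
      induction q with
      | nil => intro ha hb; exact absurd hb ha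
      | @cons a c b hadj q ih =>
        intro ha hb
        by_cases hc : c ∈ X
        · exact ⟨a, c, hadj, ha, hc⟩
        · exact ih hc hb
    obtain ⟨c, d, hcd, hcX, hdX⟩ := hcross w hXr hx
    rw [SimpleGraph.deleteEdges_adj] at hcd
    exact hcd.2 ⟨(c, d), ⟨hcd.1, hcX, hdX⟩, rfl⟩
  · rintro ⟨f, hf, hdisj⟩
    refine ⟨exists_pair_ne V, fun Y hY => ?_⟩
    rw [SimpleGraph.connected_iff]
    refine ⟨?_, ⟨vr⟩⟩
    have hreach : ∀ v : V, (G.deleteEdges Y).Reachable vr v := by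
      intro v
      by_contra hv
      set S : Set V := {x | (G.deleteEdges Y).Reachable vr x} with hSdef
      have hvrS : vr ∈ S := ⟨SimpleGraph.Walk.nil⟩
      have hvS : v ∉ S := hv
      have hrtg : ∀ {R : V → V → Prop} {x y : V}, Relation.ReflTransGen R x y →
          x ∈ S → y ∉ S → ∃ a b : V, R a b ∧ a ∈ S ∧ b ∉ S := by
        intro R x y h
        induction h with
        | refl => intro hx hy; exact absurd hx hy
        | @tail b c hxb hbc ih =>
          intro hx hy
          by_cases hb : b ∈ S
          · exact ⟨b, c, hbc, hb, hy⟩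
          · exact ih hx hb
      have hkcross : ∀ k : Fin p, ∃ a b : V, (a, b) ∈ f k ∧ a ∈ S ∧ b ∉ S :=
        fun k => hrtg ((hf k).2.2.2 v) hvrS hvS
      choose a b hab haS hbS using hkcross
      have hYmem : ∀ k : Fin p, s(a k, b k) ∈ Y := by
        intro k
        by_contra hng
        have hadj : (G.deleteEdges Y).Adj (a k) (b k) :=
          SimpleGraph.deleteEdges_adj.mpr ⟨(hf k).1 (hab k), hng⟩
        exact hbS k ((haS k).trans hadj.reachable)
      have hinj : Function.Injective (fun k : Fin p => s(a k, b k)) := by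
        intro k l hkl
        simp only [Sym2.eq_iff] at hkl
        rcases hkl with ⟨h1, h2⟩ | ⟨h1, h2⟩
        · by_contra hne
          have h3 : (a k, b k) ∈ f l := by rw [h1, h2]; exact hab l
          exact Set.disjoint_left.mp (hdisj k l hne) (hab k) h3
        · exact absurd (h1 ▸ haS k) (hbS l)
      have hle : (p : ℕ∞) ≤ Y.encard := by
        calc (p : ℕ∞) = (Set.univ : Set (Fin p)).encard := by
              simp [Set.encard_univ]
          _ = ((fun k : Fin p => s(a k, b k)) '' Set.univ).encard :=
              (Set.InjOn.encard_image (hinj.injOn)).symm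
          _ ≤ Y.encard := Set.encard_le_encard (by
              rintro y ⟨k, -, rfl⟩; exact hYmem k)
      exact absurd hY (not_lt.mpr hle)
    exact fun u w => (hreach u).symm.trans (hreach w)
end

section
/- Let G be a graph with a vertex cover X such that G[X] is p-edge-connected, and let M be a maximal matching of G − N_G[L], where L is the set of vertices of G of degree less than p. Then |N_G(L)| + |M| ≤ |X|, and hence |N_G(L) ∪ V(M)| ≤ 2|X|. -/
/-- The set `L` of vertices of degree less than `p`. -/
def lowDeg {V : Type*} [Fintype V] (G : SimpleGraph V) [DecidableRel G.Adj]
    (p : ℕ) : Set V :=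
  {v : V | G.degree v < p}

/-- The open neighborhood `N_G(L)` of a set `L`. -/
def nbhdSet {V : Type*} (G : SimpleGraph V) (L : Set V) : Set V :=
  {v : V | ∃ u ∈ L, G.Adj u v}


private def endFinset {V : Type*} [DecidableEq V] (e : Sym2 V) : Finset V :=
  Quot.liftOn e (fun p => {p.1, p.2}) (by
    intro p q h
    cases h with
    | refl => rfl
    | swap => exact Finset.pair_comm _ _)

private lemma mem_endFinset {V : Type*} [DecidableEq V] {v : V} {e : Sym2 V} :
    v ∈ endFinset e ↔ v ∈ e := by
  induction e using Sym2.ind with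
  | _ a b =>
    show v ∈ ({a, b} : Finset V) ↔ v ∈ s(a, b)
    simp [Sym2.mem_iff, Finset.mem_insert]

private lemma card_endFinset {V : Type*} [DecidableEq V] (e : Sym2 V) :
    (endFinset e).card ≤ 2 := by
  induction e using Sym2.ind with
  | _ a b =>
    calc (endFinset s(a, b)).card = ({a, b} : Finset V).card := rfl
      _ ≤ ({b} : Finset V).card + 1 := Finset.card_insert_le _ _
      _ ≤ 2 := by simp

private lemma isolated_not_connected {W : Type*} (H : SimpleGraph W) (v : W)
    (hiso : ∀ w, ¬ H.Adj v w) (b : W) (hb : b ≠ v) : ¬ H.Connected := by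
  intro hc
  obtain ⟨w⟩ := hc.preconnected v b
  cases w with
  | nil => exact hb rfl
  | cons h _ => exact hiso _ h

private lemma degX {V : Type*} [Fintype V] (G : SimpleGraph V)
    [DecidableRel G.Adj] (p : ℕ) (X : Set V)
    (hXconn : PEdgeConnected (G.induce X) p) {u : V} (hu : u ∈ X) :
    p ≤ G.degree u := by
  haveI : DecidableEq ↥X := Classical.decEq _
  by_contra hlt
  push_neg at hlt
  set G' := G.induce X with hG'
  set u' : ↥X := ⟨u, hu⟩ with hu'
  set Y : Set (Sym2 ↥X) := G'.incidenceSet u' with hYdef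
  have hY : Y.encard < (p : ℕ∞) := by
    have e1 : Y.encard = (G'.neighborSet u').encard :=
      Set.encard_congr (G'.incidenceSetEquivNeighborSet u')
    have e2 : (G'.neighborSet u').encard ≤ (G.neighborSet u).encard := by
      have him : Subtype.val '' (G'.neighborSet u') ⊆ G.neighborSet u := by
        rintro w ⟨w', hw', rfl⟩
        exact hw'
      calc (G'.neighborSet u').encard
          = (Subtype.val '' (G'.neighborSet u')).encard :=
            (Subtype.val_injective.encard_image _).symm
        _ ≤ (G.neighborSet u).encard := Set.encard_le_encard him
    have e3 : (G.neighborSet u).encard = (G.degree u : ℕ∞) := by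
      rw [← SimpleGraph.card_neighborFinset_eq_degree, ← Set.encard_coe_eq_coe_finsetCard,
        SimpleGraph.coe_neighborFinset]
    have : Y.encard ≤ (G.degree u : ℕ∞) := by rw [e1, ← e3]; exact e2
    exact lt_of_le_of_lt this (by exact_mod_cast hlt)
  have hconn := hXconn.2 Y hY
  obtain ⟨a, b, hab⟩ := hXconn.1
  have hc : ∃ c : ↥X, c ≠ u' := by
    by_cases h : a = u'
    · exact ⟨b, fun hb => hab (h ▸ hb ▸ rfl)⟩
    · exact ⟨a, h⟩
  obtain ⟨c, hc⟩ := hc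
  refine isolated_not_connected _ u' ?_ c hc hconn
  intro w hw
  rw [SimpleGraph.deleteEdges_adj] at hw
  exact hw.2 ⟨hw.1, Sym2.mem_mk_left _ _⟩

/-- If `X` is a vertex cover of `G` inducing a `p`-edge-connected subgraph and
`M` is a maximal matching of `G - N_G[L]`, where `L` is the set of vertices of
degree less than `p`, then `|N_G(L)| + |M| ≤ |X|`, and hence
`|N_G(L) ∪ V(M)| ≤ 2|X|`. -/
theorem stmt14 {V : Type*} [Fintype V] [DecidableEq V] (G : SimpleGraph V)
    [DecidableRel G.Adj] (p : ℕ) (hp : 1 ≤ p) (X : Set V)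
    (hXvc : IsVertexCover G X) (hXconn : PEdgeConnected (G.induce X) p)
    (M : Finset (Sym2 V))
    (hMedge : ∀ e ∈ M, e ∈ G.edgeSet)
    (hMavoid : ∀ e ∈ M, ∀ v ∈ e,
      v ∉ lowDeg G p ∧ v ∉ nbhdSet G (lowDeg G p))
    (hMdisj : ∀ e ∈ M, ∀ f ∈ M, e ≠ f → ∀ v : V, v ∈ e → v ∉ f)
    (hMmax : ∀ u v : V, G.Adj u v →
      u ∉ lowDeg G p → u ∉ nbhdSet G (lowDeg G p) →
      v ∉ lowDeg G p → v ∉ nbhdSet G (lowDeg G p) →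
      s(u, v) ∈ M ∨ ∃ f ∈ M, u ∈ f ∨ v ∈ f) :
    (nbhdSet G (lowDeg G p)).ncard + M.card ≤ X.ncard ∧
      (nbhdSet G (lowDeg G p) ∪ {v : V | ∃ e ∈ M, v ∈ e}).ncard ≤ 2 * X.ncard := by
  classical
  set N : Set V := nbhdSet G (lowDeg G p) with hN
  -- N ⊆ X
  have hNX : N ⊆ X := by
    rintro v ⟨u, hu, huv⟩
    rcases hXvc huv with h | h
    · exact absurd (degX G p X hXconn h) (by simpa [lowDeg] using hu)
    · exact h
  -- pick an endpoint in X for each matching edge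
  have hpick : ∀ e ∈ M, ∃ v, v ∈ X ∧ v ∈ e := by
    intro e he
    have hedge := hMedge e he
    clear he
    induction e using Sym2.ind with
    | _ a b =>
      rw [SimpleGraph.mem_edgeSet] at hedge
      rcases hXvc hedge with h | h
      · exact ⟨a, h, Sym2.mem_mk_left a b⟩
      · exact ⟨b, h, Sym2.mem_mk_right a b⟩
  choose g hg1 hg2 using hpick
  set S : Finset V := M.attach.image (fun e => g e.1 e.2) with hS
  have hginj : Function.Injective (fun e : {x // x ∈ M} => g e.1 e.2) := by
    intro e f h
    by_contra hne
    have hne' : e.1 ≠ f.1 := fun hh => hne (Subtype.ext hh)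
    exact hMdisj e.1 e.2 f.1 f.2 hne' _ (hg2 e.1 e.2) (by rw [show g e.1 e.2 = g f.1 f.2 from h]; exact hg2 f.1 f.2)
  have hScard : S.card = M.card := by
    rw [hS, Finset.card_image_of_injective _ hginj, Finset.card_attach]
  have hSX : (S : Set V) ⊆ X := by
    intro v hv
    simp only [hS, Finset.coe_image, Set.mem_image, Finset.mem_coe,
      Finset.mem_attach] at hv
    obtain ⟨e, -, rfl⟩ := hv
    exact hg1 e.1 e.2
  have hdisj : Disjoint N (S : Set V) := by
    rw [Set.disjoint_right]
    intro v hv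
    simp only [hS, Finset.coe_image, Set.mem_image, Finset.mem_coe,
      Finset.mem_attach] at hv
    obtain ⟨e, -, rfl⟩ := hv
    exact (hMavoid e.1 e.2 _ (hg2 e.1 e.2)).2
  have h1 : N.ncard + M.card ≤ X.ncard := by
    have := Set.ncard_union_eq hdisj (Set.toFinite N) (Set.toFinite _)
    calc N.ncard + M.card = (N ∪ ↑S).ncard := by
          rw [this, Set.ncard_coe_finset, hScard]
      _ ≤ X.ncard := Set.ncard_le_ncard (Set.union_subset hNX hSX) (Set.toFinite X)
  refine ⟨h1, ?_⟩
  have hVM : {v : V | ∃ e ∈ M, v ∈ e}.ncard ≤ 2 * M.card := by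
    have hsub : {v : V | ∃ e ∈ M, v ∈ e} ⊆ ↑(M.biUnion endFinset) := by
      rintro v ⟨e, he, hve⟩
      simp only [Finset.coe_biUnion, Set.mem_iUnion, Finset.mem_coe]
      exact ⟨e, he, mem_endFinset.2 hve⟩
    calc {v : V | ∃ e ∈ M, v ∈ e}.ncard ≤ (M.biUnion endFinset : Set V).ncard :=
          Set.ncard_le_ncard hsub (Set.toFinite _)
      _ = (M.biUnion endFinset).card := Set.ncard_coe_finset _
      _ ≤ ∑ e ∈ M, (endFinset e).card := Finset.card_biUnion_le
      _ ≤ ∑ e ∈ M, 2 := Finset.sum_le_sum (fun e _ => card_endFinset e)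
      _ = 2 * M.card := by rw [Finset.sum_const, smul_eq_mul, mul_comm]
  calc (N ∪ {v : V | ∃ e ∈ M, v ∈ e}).ncard
      ≤ N.ncard + {v : V | ∃ e ∈ M, v ∈ e}.ncard := Set.ncard_union_le _ _
    _ ≤ N.ncard + 2 * M.card := by omega
    _ ≤ 2 * (N.ncard + M.card) := by omega
    _ ≤ 2 * X.ncard := by omega
end

section
/- Let G be a graph and S ⊆ V(G) a vertex cover of G with G[S] p-edge-connected. Suppose Y ⊇ S and every vertex of Y \ S has at least p neighbors in S. Then G[Y] is p-edge-connected. -/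
/-- If `S` is a vertex cover of `G` with `G[S]` `p`-edge-connected, and `Y ⊇ S`
is such that every vertex of `Y \ S` has at least `p` neighbors in `S`, then
`G[Y]` is `p`-edge-connected. -/
theorem stmt15 {V : Type*} (G : SimpleGraph V) (p : ℕ) (S Y : Set V)
    (hvc : IsVertexCover G S) (hconn : PEdgeConnected (G.induce S) p)
    (hSY : S ⊆ Y)
    (hnb : ∀ v ∈ Y \ S, (p : ℕ∞) ≤ (G.neighborSet v ∩ S).encard) :
    PEdgeConnected (G.induce Y) p := by
  classical
  obtain ⟨⟨a, b, hab⟩, hS⟩ := hconn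
  constructor
  · exact ⟨Set.inclusion hSY a, Set.inclusion hSY b,
      fun h => hab (Set.inclusion_injective hSY h)⟩
  intro F hF
  set f : Sym2 S → Sym2 Y := Sym2.map (Set.inclusion hSY) with hfdef
  have hfinj : Function.Injective f :=
    Sym2.map.injective (Set.inclusion_injective hSY)
  have hF' : (f ⁻¹' F).encard < (p : ℕ∞) := by
    refine lt_of_le_of_lt ?_ hF
    rw [← Set.InjOn.encard_image (hfinj.injOn)]
    exact Set.encard_le_encard (Set.image_preimage_subset f F)
  have hSconn := hS (f ⁻¹' F) hF'
  set H := (G.induce Y).deleteEdges F with hHdef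
  -- homomorphism from deleted induced S graph into H
  let φ : ((G.induce S).deleteEdges (f ⁻¹' F)) →g H :=
    { toFun := Set.inclusion hSY
      map_rel' := by
        intro u v huv
        rw [SimpleGraph.deleteEdges_adj] at huv ⊢
        refine ⟨huv.1, fun hmem => huv.2 ?_⟩
        show f s(u, v) ∈ F
        simpa [hfdef] using hmem }
  have keyS : ∀ u v : S, H.Reachable (Set.inclusion hSY u) (Set.inclusion hSY v) :=
    fun u v => (hSconn.preconnected u v).map φ
  -- every vertex of Y reaches some S-vertex
  have keyY : ∀ y : Y, ∃ s : S, H.Reachable y (Set.inclusion hSY s) := by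
    intro y
    by_cases hy : (y : V) ∈ S
    · exact ⟨⟨y, hy⟩, SimpleGraph.Reachable.refl _⟩
    · have hp := hnb y ⟨y.2, hy⟩
      by_contra hno
      push_neg at hno
      set T := G.neighborSet (y : V) ∩ S with hT
      set g : V → Sym2 Y := fun w =>
        if h : w ∈ S then s(y, (⟨w, hSY h⟩ : Y)) else s(y, y) with hg
      have hmap : Set.MapsTo g T F := by
        intro w hw
        have hwS : w ∈ S := hw.2
        have hadj : G.Adj (y : V) w := hw.1
        simp only [hg, dif_pos hwS]
        by_contra hne
        have hadjH : H.Adj y ⟨w, hSY hwS⟩ := by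
          rw [hHdef, SimpleGraph.deleteEdges_adj]
          exact ⟨hadj, hne⟩
        exact hno ⟨w, hwS⟩ hadjH.reachable
      have hinj : Set.InjOn g T := by
        intro w1 h1 w2 h2 he
        simp only [hg, dif_pos h1.2, dif_pos h2.2, Sym2.eq, Sym2.rel_iff',
          Prod.mk.injEq, Prod.swap_prod_mk] at he
        rcases he with ⟨-, h⟩ | ⟨h, h'⟩
        · exact congrArg Subtype.val h
        · exact (congrArg Subtype.val h').trans (congrArg Subtype.val h)
      have := Set.encard_le_encard_of_injOn hmap hinj
      exact absurd (hp.trans this) (not_le.mpr hF)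
  rw [SimpleGraph.connected_iff]
  refine ⟨fun u v => ?_, ⟨Set.inclusion hSY a⟩⟩
  obtain ⟨su, hu⟩ := keyY u
  obtain ⟨sv, hv⟩ := keyY v
  exact hu.trans ((keyS su sv).trans hv.symm)
end

section
/- Let G be a bipartite graph with parts R and B, and construct H as follows: add a clique A = {a_1,…,a_p} adjacent to all of R; replace each vertex b^j of B by a clique {b^j_1,…,b^j_p} where each b^j_i is adjacent to exactly the G-neighbors (in R) of b^j; attach a pendant vertex to every vertex of A and of the new cliques. Assume every vertex of R has a neighbor in B, every vertex of B has a neighbor in R, |B| = t ≥ p, and k ≥ p. Then G has a set R* ⊆ R of size at most k with N_G(R*) = B if and only if H has a vertex cover of size at most k + p(t+1) inducing a p-edge-connected subgraph. -/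
set_option maxHeartbeats 1000000


/-- The underlying symmetric relation of the graph `H` built from the bipartite
graph `(R, B, Adj)`: a clique `A = Fin p` joined to all of `R`; each `b ∈ B`
replaced by a clique `{b} × Fin p` whose vertices are adjacent to exactly the
`Adj`-neighbors of `b` in `R`; and a pendant vertex attached to every vertex of
`A` and of the `B`-cliques.  The vertex set is
`(R ⊕ A) ⊕ ((B × Fin p) ⊕ pendants)`. -/
def redRel (R B : Type*) (p : ℕ) (Adj : R → B → Prop) :
    (R ⊕ Fin p) ⊕ ((B × Fin p) ⊕ (Fin p ⊕ B × Fin p)) →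
      (R ⊕ Fin p) ⊕ ((B × Fin p) ⊕ (Fin p ⊕ B × Fin p)) → Prop
  | Sum.inl (Sum.inr _), Sum.inl (Sum.inr _) => True        -- the clique `A`
  | Sum.inl (Sum.inr _), Sum.inl (Sum.inl _) => True        -- `A` joined to `R`
  | Sum.inl (Sum.inl u), Sum.inr (Sum.inl bi) => Adj u bi.1 -- `R` to `B`-cliques
  | Sum.inr (Sum.inl bi), Sum.inr (Sum.inl bi') => bi.1 = bi'.1 -- `B`-cliques
  | Sum.inl (Sum.inr a), Sum.inr (Sum.inr (Sum.inl a')) => a = a' -- pendants of `A`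
  | Sum.inr (Sum.inl bi), Sum.inr (Sum.inr (Sum.inr bi')) => bi = bi' -- pendants of `B`-cliques
  | _, _ => False

/-! ### Generic auxiliary lemmas about edge deletion and connectivity -/

lemma aux_encard_le {V' α : Type*} [Fintype α] {Y : Set (Sym2 V')} (g : α → Sym2 V')
    (hg : Function.Injective g) (hgY : ∀ a, g a ∈ Y) : (Fintype.card α : ℕ∞) ≤ Y.encard := by
  have h1 : Set.range g ⊆ Y := by rintro e ⟨a, rfl⟩; exact hgY a
  have h2 : (Set.range g).encard = Fintype.card α := by
    rw [← Set.image_univ, hg.encard_image, Set.encard_univ, ENat.card_eq_coe_fintype_card]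
  exact h2 ▸ Set.encard_mono h1

lemma walk_closed {V' : Type*} {G' : SimpleGraph V'} {S : Set V'}
    (hS : ∀ u ∈ S, ∀ v, G'.Adj u v → v ∈ S) :
    ∀ {a b : V'}, G'.Walk a b → a ∈ S → b ∈ S
  | _, _, SimpleGraph.Walk.nil, h => h
  | _, _, SimpleGraph.Walk.cons h' w, h => walk_closed hS w (hS _ h _ h')

lemma reach_closed {V' : Type*} {G' : SimpleGraph V'} {S : Set V'}
    (hS : ∀ u ∈ S, ∀ v, G'.Adj u v → v ∈ S) {u v : V'} (h : G'.Reachable u v)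
    (hu : u ∈ S) : v ∈ S := by
  obtain ⟨w⟩ := h; exact walk_closed hS w hu

lemma not_isolated {V' : Type*} {G' : SimpleGraph V'} (hc : G'.Connected) {x y : V'}
    (hxy : x ≠ y) (hiso : ∀ z, ¬ G'.Adj x z) : False := by
  have hy : y ∈ ({x} : Set V') := by
    refine reach_closed ?_ (hc.preconnected x y) rfl
    intro u hu v hadj
    rw [Set.mem_singleton_iff] at hu
    exact absurd (hu ▸ hadj) (hiso v)
  exact hxy (Set.mem_singleton_iff.mp hy).symm

lemma robust_star {V' : Type*} {G' : SimpleGraph V'} {Y : Set (Sym2 V')} {p : ℕ}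
    (hY : Y.encard < (p : ℕ∞)) {u : V'} {ι : Type*} [Fintype ι] (hcard : Fintype.card ι = p)
    (n : ι → V') (hn : Function.Injective n) (hadj : ∀ i, G'.Adj u (n i)) :
    ∃ i, (G'.deleteEdges Y).Adj u (n i) := by
  by_contra h
  push_neg at h
  have hall : ∀ i, s(u, n i) ∈ Y := by
    intro i
    by_contra he
    exact h i (SimpleGraph.deleteEdges_adj.mpr ⟨hadj i, he⟩)
  have hinj : Function.Injective fun i => s(u, n i) := by
    intro i j hij
    rcases Sym2.eq_iff.mp hij with ⟨-, h2⟩ | ⟨h1, -⟩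
    · exact hn h2
    · exact absurd h1.symm (hadj j).ne'
  have := aux_encard_le _ hinj hall
  rw [hcard] at this
  exact absurd (lt_of_lt_of_le hY this) (lt_irrefl _)

lemma robust_two_step {V' : Type*} {G' : SimpleGraph V'} {Y : Set (Sym2 V')} {p : ℕ}
    (hY : Y.encard < (p : ℕ∞)) {u v : V'} (huv : G'.Adj u v) {ι : Type*} [Fintype ι]
    (hcard : Fintype.card ι + 1 = p) (m : ι → V') (hm : Function.Injective m)
    (hmu : ∀ j, m j ≠ u) (hmv : ∀ j, m j ≠ v)
    (h1 : ∀ j, G'.Adj u (m j)) (h2 : ∀ j, G'.Adj (m j) v) :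
    (G'.deleteEdges Y).Reachable u v := by
  classical
  by_cases h0 : s(u, v) ∈ Y
  · by_cases hj : ∃ j, s(u, m j) ∉ Y ∧ s(m j, v) ∉ Y
    · obtain ⟨j, hj1, hj2⟩ := hj
      exact (SimpleGraph.deleteEdges_adj.mpr ⟨h1 j, hj1⟩).reachable.trans
        (SimpleGraph.deleteEdges_adj.mpr ⟨h2 j, hj2⟩).reachable
    · push_neg at hj
      set g : Option ι → Sym2 V' :=
        fun o => o.elim s(u, v) (fun j => if s(u, m j) ∈ Y then s(u, m j) else s(m j, v)) with hg
      have hgmem : ∀ j : ι, g (some j) = s(u, m j) ∨ g (some j) = s(m j, v) := by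
        intro j
        by_cases hc : s(u, m j) ∈ Y <;> simp [hg, hc]
      have hgY : ∀ o, g o ∈ Y := by
        rintro (_ | j)
        · exact h0
        · by_cases hc : s(u, m j) ∈ Y
          · simpa [hg, hc] using hc
          · have := hj j hc
            simpa [hg, hc] using this
      have hmemj : ∀ j : ι, m j ∈ g (some j) := by
        intro j
        rcases hgmem j with h | h <;> rw [h] <;> simp
      have hginj : Function.Injective g := by
        rintro (_ | j) (_ | j') heq
        · rfl
        · exfalso
          have := hmemj j'
          rw [← heq] at this
          rcases Sym2.mem_iff.mp this with h | h
          · exact hmu j' h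
          · exact hmv j' h
        · exfalso
          have := hmemj j
          rw [heq] at this
          rcases Sym2.mem_iff.mp this with h | h
          · exact hmu j h
          · exact hmv j h
        · congr 1
          have := hmemj j
          rw [heq] at this
          rcases hgmem j' with h | h <;> rw [h] at this <;>
              rcases Sym2.mem_iff.mp this with h' | h'
          · exact absurd h' (hmu j)
          · exact hm h'
          · exact hm h'
          · exact absurd h' (hmv j)
      have := aux_encard_le g hginj hgY
      rw [Fintype.card_option, hcard] at this
      exact absurd (lt_of_lt_of_le hY this) (lt_irrefl _)
  · exact (SimpleGraph.deleteEdges_adj.mpr ⟨huv, h0⟩).reachable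

/-! ### Adjacency lemmas for the reduction graph -/

section RedAdj
variable {R B : Type*} {p : ℕ} {Adj : R → B → Prop}

lemma redAdj_AA {i j : Fin p} (h : i ≠ j) :
    (SimpleGraph.fromRel (redRel R B p Adj)).Adj (Sum.inl (Sum.inr i)) (Sum.inl (Sum.inr j)) := by
  rw [SimpleGraph.fromRel_adj]
  exact ⟨by simp [h], Or.inl (by simp [redRel])⟩

lemma redAdj_AR (i : Fin p) (r : R) :
    (SimpleGraph.fromRel (redRel R B p Adj)).Adj (Sum.inl (Sum.inr i)) (Sum.inl (Sum.inl r)) := by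
  rw [SimpleGraph.fromRel_adj]
  exact ⟨by simp, Or.inl (by simp [redRel])⟩

lemma redAdj_RB {r : R} {b : B} (h : Adj r b) (i : Fin p) :
    (SimpleGraph.fromRel (redRel R B p Adj)).Adj (Sum.inl (Sum.inl r))
      (Sum.inr (Sum.inl (b, i))) := by
  rw [SimpleGraph.fromRel_adj]
  exact ⟨by simp, Or.inl (by simp [redRel, h])⟩

lemma redAdj_BB {b : B} {i j : Fin p} (h : i ≠ j) :
    (SimpleGraph.fromRel (redRel R B p Adj)).Adj (Sum.inr (Sum.inl (b, i)))
      (Sum.inr (Sum.inl (b, j))) := by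
  rw [SimpleGraph.fromRel_adj]
  exact ⟨by simp [h], Or.inl (by simp [redRel])⟩

lemma redAdj_ApA (i : Fin p) :
    (SimpleGraph.fromRel (redRel R B p Adj)).Adj (Sum.inl (Sum.inr i))
      (Sum.inr (Sum.inr (Sum.inl i))) := by
  rw [SimpleGraph.fromRel_adj]
  exact ⟨by simp, Or.inl (by simp [redRel])⟩

lemma redAdj_BpB (b : B) (i : Fin p) :
    (SimpleGraph.fromRel (redRel R B p Adj)).Adj (Sum.inr (Sum.inl (b, i)))
      (Sum.inr (Sum.inr (Sum.inr (b, i)))) := by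
  rw [SimpleGraph.fromRel_adj]
  exact ⟨by simp, Or.inl (by simp [redRel])⟩

/-- Neighbors of a `B`-clique vertex. -/
lemma redAdj_B_cases {b : B} {i : Fin p} {y}
    (h : (SimpleGraph.fromRel (redRel R B p Adj)).Adj (Sum.inr (Sum.inl (b, i))) y) :
    (∃ j, j ≠ i ∧ y = Sum.inr (Sum.inl (b, j))) ∨ (∃ r, Adj r b ∧ y = Sum.inl (Sum.inl r)) ∨
      y = Sum.inr (Sum.inr (Sum.inr (b, i))) := by
  rw [SimpleGraph.fromRel_adj] at h
  rcases y with (r | a) | (⟨b', j⟩ | (a' | bj')) <;> simp_all [redRel] <;> aesop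

/-- Neighbors of a pendant of `A`. -/
lemma redAdj_pA_cases {i : Fin p} {y}
    (h : (SimpleGraph.fromRel (redRel R B p Adj)).Adj (Sum.inr (Sum.inr (Sum.inl i))) y) :
    y = Sum.inl (Sum.inr i) := by
  rw [SimpleGraph.fromRel_adj] at h
  rcases y with (r | a) | (⟨b', j⟩ | (a' | bj')) <;> simp_all [redRel]

/-- Neighbors of a pendant of a `B`-clique. -/
lemma redAdj_pB_cases {b : B} {i : Fin p} {y}
    (h : (SimpleGraph.fromRel (redRel R B p Adj)).Adj (Sum.inr (Sum.inr (Sum.inr (b, i)))) y) :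
    y = Sum.inr (Sum.inl (b, i)) := by
  rw [SimpleGraph.fromRel_adj] at h
  rcases y with (r | a) | (⟨b', j⟩ | (a' | bj')) <;> simp_all [redRel]

end RedAdj

/-! ### The candidate vertex cover -/

section CC
variable {R B : Type*} [Fintype R] [Fintype B] {p : ℕ}

def CC (p : ℕ) (B : Type*) (Rs : Finset R) :
    Set ((R ⊕ Fin p) ⊕ ((B × Fin p) ⊕ (Fin p ⊕ B × Fin p))) :=
  (fun r => Sum.inl (Sum.inl r)) '' ↑Rs ∪ (Set.range fun i : Fin p => Sum.inl (Sum.inr i)) ∪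
    Set.range fun bi : B × Fin p => Sum.inr (Sum.inl bi)

omit [Fintype R] [Fintype B] in
lemma memCC_R {Rs : Finset R} {r : R} (h : r ∈ Rs) :
    (Sum.inl (Sum.inl r) : (R ⊕ Fin p) ⊕ ((B × Fin p) ⊕ (Fin p ⊕ B × Fin p))) ∈ CC p B Rs :=
  Or.inl (Or.inl ⟨r, h, rfl⟩)

omit [Fintype R] [Fintype B] in
lemma memCC_A {Rs : Finset R} (i : Fin p) :
    (Sum.inl (Sum.inr i) : (R ⊕ Fin p) ⊕ ((B × Fin p) ⊕ (Fin p ⊕ B × Fin p))) ∈ CC p B Rs :=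
  Or.inl (Or.inr ⟨i, rfl⟩)

omit [Fintype R] [Fintype B] in
lemma memCC_B {Rs : Finset R} (bi : B × Fin p) :
    (Sum.inr (Sum.inl bi) : (R ⊕ Fin p) ⊕ ((B × Fin p) ⊕ (Fin p ⊕ B × Fin p))) ∈ CC p B Rs :=
  Or.inr ⟨bi, rfl⟩

omit [Fintype R] [Fintype B] in
lemma memCC_iff {Rs : Finset R} {x : (R ⊕ Fin p) ⊕ ((B × Fin p) ⊕ (Fin p ⊕ B × Fin p))} :
    x ∈ CC p B Rs ↔ (∃ r ∈ Rs, x = Sum.inl (Sum.inl r)) ∨ (∃ i, x = Sum.inl (Sum.inr i)) ∨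
      ∃ bi, x = Sum.inr (Sum.inl bi) := by
  unfold CC
  constructor
  · rintro ((⟨r, hr, rfl⟩ | ⟨i, rfl⟩) | ⟨bi, rfl⟩)
    · exact Or.inl ⟨r, hr, rfl⟩
    · exact Or.inr (Or.inl ⟨i, rfl⟩)
    · exact Or.inr (Or.inr ⟨bi, rfl⟩)
  · rintro (⟨r, hr, rfl⟩ | ⟨i, rfl⟩ | ⟨bi, rfl⟩)
    · exact Or.inl (Or.inl ⟨r, hr, rfl⟩)
    · exact Or.inl (Or.inr ⟨i, rfl⟩)
    · exact Or.inr ⟨bi, rfl⟩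

lemma CC_ncard (Rs : Finset R) : (CC p B Rs).ncard = Rs.card + p + Fintype.card B * p := by
  unfold CC
  rw [Set.ncard_union_eq, Set.ncard_union_eq]
  · rw [Set.ncard_image_of_injective _ (fun a b h => by simpa using h),
      ← Set.image_univ, ← Set.image_univ,
      Set.ncard_image_of_injective _ (fun a b h => by simpa using h),
      Set.ncard_image_of_injective _ (fun a b h => by simpa using h),
      Set.ncard_univ, Set.ncard_univ, Set.ncard_coe_finset]
    simp [Nat.card_eq_fintype_card]
  · rw [Set.disjoint_left]
    rintro x ⟨r, hr, rfl⟩ ⟨i, hi⟩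
    simp at hi
  · rw [Set.disjoint_left]
    rintro x ((⟨r, hr, rfl⟩ | ⟨i, rfl⟩)) ⟨bi, hbi⟩ <;> simp at hbi

end CC

/-! ### Connectivity of the induced cover -/

lemma CC_connected {R B : Type*} [Fintype R] [Fintype B] {p : ℕ} (hp : 2 ≤ p)
    {Adj : R → B → Prop} (Rs : Finset R) {r0 : R} (hr0 : r0 ∈ Rs)
    (hdom : ∀ b : B, ∃ r ∈ Rs, Adj r b)
    (Y : Set (Sym2 ↥(CC p B Rs))) (hY : Y.encard < (p : ℕ∞)) :
    (((SimpleGraph.fromRel (redRel R B p Adj)).induce (CC p B Rs)).deleteEdges Y).Connected := by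
  classical
  set H := SimpleGraph.fromRel (redRel R B p Adj) with hH
  set G' := H.induce (CC p B Rs) with hG'
  have hGadj : ∀ (x y : ↥(CC p B Rs)), H.Adj x.1 y.1 → G'.Adj x y := fun x y h => h
  have i0 : Fin p := ⟨0, by omega⟩
  set a0 : ↥(CC p B Rs) := ⟨Sum.inl (Sum.inr (⟨0, by omega⟩ : Fin p)), memCC_A _⟩ with ha0
  rw [SimpleGraph.connected_iff]
  refine ⟨?_, ⟨a0⟩⟩
  suffices hreach : ∀ x : ↥(CC p B Rs), (G'.deleteEdges Y).Reachable x a0 by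
    intro x y; exact (hreach x).trans (hreach y).symm
  -- step 1 : each clique vertex `a_i` reaches `a_0`
  have step1 : ∀ i : Fin p,
      (G'.deleteEdges Y).Reachable ⟨Sum.inl (Sum.inr i), memCC_A i⟩ a0 := by
    intro i
    by_cases hi : i = ⟨0, by omega⟩
    · subst hi; exact SimpleGraph.Reachable.refl _
    · refine robust_two_step hY (hGadj _ _ (redAdj_AA hi)) ?_
        (fun o : Option {j : Fin p // j ≠ ⟨0, by omega⟩ ∧ j ≠ i} =>
          o.elim ⟨Sum.inl (Sum.inl r0), memCC_R hr0⟩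
            fun j => ⟨Sum.inl (Sum.inr j.1), memCC_A j.1⟩) ?_ ?_ ?_ ?_ ?_
      · -- cardinality
        rw [Fintype.card_option]
        have hcard2 : Fintype.card {j : Fin p // j ≠ ⟨0, by omega⟩ ∧ j ≠ i} = p - 2 := by
          rw [Fintype.card_subtype]
          have he : (Finset.univ.filter fun j : Fin p => j ≠ ⟨0, by omega⟩ ∧ j ≠ i)
              = ({⟨0, by omega⟩, i} : Finset (Fin p))ᶜ := by
            ext j
            simp [not_or]
          rw [he, Finset.card_compl, Fintype.card_fin,
            Finset.card_insert_of_notMem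
              (by simp only [Finset.mem_singleton]; exact fun h => hi h.symm),
            Finset.card_singleton]
        omega
      · -- injectivity of midpoints
        rintro (_ | j) (_ | j') heq
        · rfl
        · exact absurd (congrArg Subtype.val heq) (by simp)
        · exact absurd (congrArg Subtype.val heq) (by simp)
        · have := congrArg Subtype.val heq
          simp only [Option.elim] at this
          congr 1
          exact Subtype.ext (by simpa using this)
      · rintro (_ | j) <;> intro heq <;> have := congrArg Subtype.val heq <;>
          simp only [Option.elim] at this <;> simp at this
        exact j.2.2 this
      · rintro (_ | j) <;> intro heq <;> have := congrArg Subtype.val heq <;>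
          simp only [Option.elim] at this <;> simp [ha0] at this
        exact j.2.1 this
      · rintro (_ | j)
        · exact hGadj _ _ (redAdj_AR i r0)
        · exact hGadj _ _ (redAdj_AA fun h => j.2.2 h.symm)
      · rintro (_ | j)
        · exact hGadj _ _ (redAdj_AR _ r0).symm
        · exact hGadj _ _ (redAdj_AA j.2.1)
  -- step 2 : each `r ∈ Rs` reaches `a_0`
  have step2 : ∀ (r : R) (hr : r ∈ Rs),
      (G'.deleteEdges Y).Reachable ⟨Sum.inl (Sum.inl r), memCC_R hr⟩ a0 := by
    intro r hr
    obtain ⟨i, hi⟩ := robust_star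
      (u := (⟨Sum.inl (Sum.inl r), memCC_R hr⟩ : ↥(CC p B Rs))) hY (Fintype.card_fin p)
      (fun i : Fin p => (⟨Sum.inl (Sum.inr i), memCC_A i⟩ : ↥(CC p B Rs)))
      (fun i j h => by simpa using congrArg Subtype.val h)
      (fun i => hGadj _ _ (redAdj_AR i r).symm)
    exact hi.reachable.trans (step1 i)
  -- step 3 : each `B`-clique vertex reaches `a_0`
  have step3 : ∀ (b : B) (i : Fin p),
      (G'.deleteEdges Y).Reachable ⟨Sum.inr (Sum.inl (b, i)), memCC_B (b, i)⟩ a0 := by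
    intro b i
    obtain ⟨r, hr, hrb⟩ := hdom b
    have hbr : (G'.deleteEdges Y).Reachable ⟨Sum.inr (Sum.inl (b, i)), memCC_B (b, i)⟩
        ⟨Sum.inl (Sum.inl r), memCC_R hr⟩ := by
      refine robust_two_step hY (hGadj _ _ (redAdj_RB hrb i).symm) ?_
        (fun j : {j : Fin p // j ≠ i} => ⟨Sum.inr (Sum.inl (b, j.1)), memCC_B (b, j.1)⟩)
        ?_ ?_ ?_ ?_ ?_
      · have : Fintype.card {j : Fin p // j ≠ i} = p - 1 := by
          rw [Fintype.card_subtype_compl, Fintype.card_subtype_eq, Fintype.card_fin]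
        omega
      · intro j j' h
        exact Subtype.ext (by simpa using congrArg Subtype.val h)
      · intro j heq
        have := congrArg Subtype.val heq
        simp at this
        exact j.2 this
      · intro j heq
        have := congrArg Subtype.val heq
        simp at this
      · intro j
        exact hGadj _ _ (redAdj_BB fun h => j.2 h.symm)
      · intro j
        exact hGadj _ _ (redAdj_RB hrb j.1).symm
    exact hbr.trans (step2 r hr)
  -- assemble
  rintro ⟨(r | i) | (⟨b, i⟩ | (i | bi)), hx⟩
  · rcases memCC_iff.mp hx with ⟨r', hr', heq⟩ | ⟨i, heq⟩ | ⟨bi, heq⟩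
    · have : r = r' := by simpa using heq
      subst this
      exact step2 r hr'
    · simp at heq
    · simp at heq
  · exact step1 i
  · exact step3 b i
  · exfalso
    rcases memCC_iff.mp hx with ⟨r', hr', heq⟩ | ⟨i', heq⟩ | ⟨bi', heq⟩ <;> simp at heq
  · exfalso
    rcases memCC_iff.mp hx with ⟨r', hr', heq⟩ | ⟨i', heq⟩ | ⟨bi', heq⟩ <;> simp at heq

/-- Correctness of the reduction from Red-Blue Dominating Set to
`p`-Edge-Connected Vertex Cover: `G` has a set `R* ⊆ R` of size at most `k`
dominating all of `B` iff `H` has a vertex cover of size at most `k + p(t+1)`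
inducing a `p`-edge-connected subgraph. -/
theorem stmt17 {R B : Type*} [Fintype R] [Fintype B] [DecidableEq R]
    [DecidableEq B] (p t k : ℕ) (hp : 2 ≤ p) (Adj : R → B → Prop)
    (hR : ∀ r : R, ∃ b : B, Adj r b) (hB : ∀ b : B, ∃ r : R, Adj r b)
    (ht : Fintype.card B = t) (htp : p ≤ t) (hk : p ≤ k) :
    (∃ Rs : Finset R, Rs.card ≤ k ∧ ∀ b : B, ∃ r ∈ Rs, Adj r b) ↔
      (∃ C : Set ((R ⊕ Fin p) ⊕ ((B × Fin p) ⊕ (Fin p ⊕ B × Fin p))),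
        IsVertexCover (SimpleGraph.fromRel (redRel R B p Adj)) C ∧
          C.ncard ≤ k + p * (t + 1) ∧
          PEdgeConnected ((SimpleGraph.fromRel (redRel R B p Adj)).induce C) p) := by
  classical
  constructor
  · rintro ⟨Rs, hRk, hdom⟩
    have hBne : Nonempty B := by
      rw [← Fintype.card_pos_iff]; omega
    obtain ⟨b0⟩ := hBne
    obtain ⟨r0, hr0, -⟩ := hdom b0
    refine ⟨CC p B Rs, ?_, ?_, ?_⟩
    · -- vertex cover
      intro u v h
      rw [SimpleGraph.fromRel_adj] at h
      rcases u with (r | i) | (⟨b, i⟩ | (i | ⟨b, i⟩)) <;>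
        rcases v with (r' | i') | (⟨b', i'⟩ | (i' | ⟨b', i'⟩)) <;>
        simp only [redRel, ne_eq, false_or, or_false, or_self, and_false, and_true] at h <;>
        first
          | exact h.elim
          | exact h.2.elim
          | exact Or.inl (memCC_A _)
          | exact Or.inr (memCC_A _)
          | exact Or.inl (memCC_B _)
          | exact Or.inr (memCC_B _)
    · -- cardinality
      rw [CC_ncard, ht, show p * (t + 1) = p + t * p by ring]
      omega
    · -- p-edge-connectivity
      refine ⟨⟨⟨Sum.inl (Sum.inr (⟨0, by omega⟩ : Fin p)), memCC_A _⟩,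
          ⟨Sum.inl (Sum.inr (⟨1, by omega⟩ : Fin p)), memCC_A _⟩, ?_⟩,
        fun Y hY => CC_connected hp Rs hr0 hdom Y hY⟩
      intro h
      have := congrArg Subtype.val h
      simp [Fin.ext_iff] at this
  · rintro ⟨C, hVC, hcard, ⟨x0, y0, hxy0⟩, hconn⟩
    set H := SimpleGraph.fromRel (redRel R B p Adj) with hH
    set G' := H.induce C with hG'
    have hG0 : G'.Connected := by
      have := hconn ∅ (by rw [Set.encard_empty]; exact_mod_cast (by omega : 0 < p))
      rwa [SimpleGraph.deleteEdges_empty] at this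
    -- a vertex whose unique possible neighbor is `w` cannot be in `C`
    have key : ∀ (q w : (R ⊕ Fin p) ⊕ ((B × Fin p) ⊕ (Fin p ⊕ B × Fin p))),
        q ∈ C → (∀ z, H.Adj q z → z = w) → False := by
      intro q w hq huniq
      by_cases hw : w ∈ C
      · set Y : Set (Sym2 ↥C) := {s((⟨q, hq⟩ : ↥C), (⟨w, hw⟩ : ↥C))} with hYdef
        have hc2 := hconn Y (by
          rw [hYdef, Set.encard_singleton]
          exact_mod_cast (by omega : 1 < p))
        have hiso : ∀ z, ¬ (G'.deleteEdges Y).Adj ⟨q, hq⟩ z := by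
          intro z hz
          rw [SimpleGraph.deleteEdges_adj] at hz
          obtain ⟨hz1, hz2⟩ := hz
          have hzw : z = (⟨w, hw⟩ : ↥C) := Subtype.ext (huniq z.val hz1)
          exact hz2 (by rw [hzw]; exact rfl)
        rcases eq_or_ne x0 (⟨q, hq⟩ : ↥C) with rfl | hne
        · exact not_isolated hc2 (Ne.symm (Ne.symm hxy0)) hiso
        · exact not_isolated hc2 hne.symm hiso
      · have hiso : ∀ z, ¬ G'.Adj ⟨q, hq⟩ z := by
          intro z hz
          have hzw : z.val = w := huniq z.val hz
          exact hw (hzw ▸ z.2)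
        rcases eq_or_ne x0 (⟨q, hq⟩ : ↥C) with rfl | hne
        · exact not_isolated hG0 (Ne.symm (Ne.symm hxy0)) hiso
        · exact not_isolated hG0 hne.symm hiso
    have hnoPA : ∀ i : Fin p, Sum.inr (Sum.inr (Sum.inl i)) ∉ C := fun i hmem =>
      key _ _ hmem fun z hz => redAdj_pA_cases hz
    have hnoPB : ∀ bi : B × Fin p, Sum.inr (Sum.inr (Sum.inr bi)) ∉ C := fun bi hmem =>
      key _ _ hmem fun z hz => redAdj_pB_cases (b := bi.1) (i := bi.2) hz
    have hA : ∀ i : Fin p, Sum.inl (Sum.inr i) ∈ C := by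
      intro i
      rcases hVC (redAdj_ApA i) with h | h
      · exact h
      · exact absurd h (hnoPA i)
    have hBc : ∀ bi : B × Fin p, Sum.inr (Sum.inl bi) ∈ C := by
      intro bi
      rcases hVC (redAdj_BpB bi.1 bi.2) with h | h
      · exact h
      · exact absurd h (hnoPB bi)
    set Rs : Finset R := Finset.univ.filter (fun r => Sum.inl (Sum.inl r) ∈ C) with hRs
    have hCeq : C = CC p B Rs := by
      ext x
      rw [memCC_iff]
      constructor
      · intro hx
        rcases x with (r | i) | (⟨b, i⟩ | (i | bi))
        · exact Or.inl ⟨r, by simp [hRs, hx], rfl⟩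
        · exact Or.inr (Or.inl ⟨i, rfl⟩)
        · exact Or.inr (Or.inr ⟨(b, i), rfl⟩)
        · exact absurd hx (hnoPA i)
        · exact absurd hx (hnoPB bi)
      · rintro (⟨r, hr, rfl⟩ | ⟨i, rfl⟩ | ⟨bi, rfl⟩)
        · simp [hRs] at hr; exact hr
        · exact hA i
        · exact hBc bi
    have hRsk : Rs.card ≤ k := by
      rw [hCeq, CC_ncard, ht, show p * (t + 1) = p + t * p by ring] at hcard
      omega
    refine ⟨Rs, hRsk, ?_⟩
    intro b
    by_contra hnb
    push_neg at hnb
    -- the B-clique of `b` would be cut off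
    have hz0 : (0 : ℕ) < p := by omega
    set S : Set ↥C := {z : ↥C | ∃ j : Fin p, z.val = Sum.inr (Sum.inl (b, j))} with hS
    have hclosed : ∀ u ∈ S, ∀ v, G'.Adj u v → v ∈ S := by
      rintro u ⟨j, hj⟩ v hadj
      have hadj' : H.Adj u.val v.val := hadj
      rw [hj] at hadj'
      rcases redAdj_B_cases hadj' with ⟨j', -, heq⟩ | ⟨r, hrb, heq⟩ | heq
      · exact ⟨j', heq⟩
      · exfalso
        have hrC : Sum.inl (Sum.inl r) ∈ C := heq ▸ v.2
        have : r ∈ Rs := by simp [hRs, hrC]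
        exact hnb r this hrb
      · exact absurd (heq ▸ v.2) (hnoPB (b, j))
    have hreach := hG0.preconnected ⟨Sum.inr (Sum.inl (b, ⟨0, hz0⟩)), hBc (b, ⟨0, hz0⟩)⟩
      ⟨Sum.inl (Sum.inr (⟨0, hz0⟩ : Fin p)), hA ⟨0, hz0⟩⟩
    have := reach_closed hclosed hreach ⟨⟨0, hz0⟩, rfl⟩
    obtain ⟨j, hj⟩ := this
    simp at hj
end
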